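/- Let M ≥ 1 be an integer, p ∈ (0,1], and let Z_1, …, Z_M be independent Bernoulli(p) random variables on a probability space. Let Δ_1, …, Δ_M ∈ {0,1} be fixed constants, set ρ = (1/M) Σ_i Δ_i, and on the event Σ_i Z_i > 0 define ρ̂ = (Σ_i Z_i Δ_i) / (Σ_i Z_i). For any real ε with 0 < ε < pM, with probability at least 1 − 4·exp(−2ε²/M), the event {Σ_i Z_i > 0 and |ρ̂ − ρ| ≤ 2ε/(pM − ε)} holds. -/

import Mathlib

open MeasureTheory ProbabilityTheory BigOperators


lemma bern_hoeffding {p : ℝ} (hp0 : 0 ≤ p) (hp1 : p ≤ 1) (s : ℝ) :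
    (1 - p + p * Real.exp s) * Real.exp (-(s * p)) ≤ Real.exp (s ^ 2 / 8) := by
  rcases eq_or_lt_of_le hp1 with hp | hp
  · subst hp
    have : (1 - 1 + 1 * Real.exp s) * Real.exp (-(s * 1)) = 1 := by
      rw [mul_one, one_mul, sub_self, zero_add, ← Real.exp_add, add_neg_cancel, Real.exp_zero]
    rw [this]
    exact Real.one_le_exp (by positivity)
  · -- p < 1
    have hq : 0 < 1 - p := by linarith
    set φ : ℝ → ℝ := fun s => 1 - p + p * Real.exp s with hφdef
    have hpos : ∀ s, 0 < φ s := fun s => by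
      have : 0 ≤ p * Real.exp s := by positivity
      simp only [hφdef]; linarith
    set L : ℝ → ℝ := fun s => Real.log (φ s) - s * p with hLdef
    set g : ℝ → ℝ := fun s => s ^ 2 / 8 - L s with hgdef
    set d1 : ℝ → ℝ := fun s => s / 4 - (p * Real.exp s / φ s - p) with hd1def
    have hφ : ∀ s, HasDerivAt φ (p * Real.exp s) s := fun s =>
      (((Real.hasDerivAt_exp s).const_mul p).const_add (1 - p))
    have hg : ∀ s, HasDerivAt g (d1 s) s := by
      intro s
      have h1 : HasDerivAt (fun s : ℝ => s ^ 2 / 8) (s / 4) s := by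
        have := (hasDerivAt_pow 2 s).div_const 8
        exact this.congr_deriv (by norm_num; ring)
      have h2 : HasDerivAt L (p * Real.exp s / φ s - p) s := by
        have hlog := (hφ s).log (hpos s).ne'
        have hlin : HasDerivAt (fun s : ℝ => s * p) p s := by
          simpa using (hasDerivAt_id s).mul_const p
        exact hlog.sub hlin
      exact h1.sub h2
    have hd1 : ∀ s, HasDerivAt d1
        (1 / 4 - ((1 - p) * (p * Real.exp s)) / (φ s) ^ 2) s := by
      intro s
      have h1 : HasDerivAt (fun s : ℝ => s / 4) (1 / 4) s := by
        simpa using (hasDerivAt_id s).div_const 4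
      have h2 : HasDerivAt (fun s => p * Real.exp s / φ s)
          ((p * Real.exp s * φ s - p * Real.exp s * (p * Real.exp s)) / (φ s) ^ 2) s :=
        ((Real.hasDerivAt_exp s).const_mul p).div (hφ s) (hpos s).ne'
      have h2' : HasDerivAt (fun s => p * Real.exp s / φ s)
          (((1 - p) * (p * Real.exp s)) / (φ s) ^ 2) s := by
        convert h2 using 1
        rw [hφdef]; ring
      exact h1.sub (h2'.sub_const p)
    have hd2nn : ∀ s, 0 ≤ 1 / 4 - ((1 - p) * (p * Real.exp s)) / (φ s) ^ 2 := by
      intro s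
      rw [sub_nonneg, div_le_iff₀ (by positivity : (0:ℝ) < (φ s)^2)]
      have h4 : 0 ≤ ((1 - p) - p * Real.exp s) ^ 2 := sq_nonneg _
      simp only [hφdef]
      nlinarith [Real.exp_pos s]
    have hd1mono : Monotone d1 := by
      refine monotone_of_deriv_nonneg (fun s => (hd1 s).differentiableAt) ?_
      intro s
      rw [(hd1 s).deriv]
      exact hd2nn s
    have hd10 : d1 0 = 0 := by
      simp only [hd1def, hφdef, Real.exp_zero]
      norm_num
    have hg0 : g 0 = 0 := by
      simp only [hgdef, hLdef, hφdef, Real.exp_zero]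
      norm_num
    have hgnn : ∀ s, 0 ≤ g s := by
      intro s
      rcases le_total 0 s with hs | hs
      · have hmono : MonotoneOn g (Set.Ici 0) := by
          refine monotoneOn_of_deriv_nonneg (convex_Ici 0)
            (Continuous.continuousOn (by
              exact continuous_iff_continuousAt.mpr fun x => (hg x).continuousAt)) ?_ ?_
          · intro x _; exact (hg x).differentiableAt.differentiableWithinAt
          · intro x hx
            rw [(hg x).deriv]
            have h0x : (0:ℝ) ≤ x := le_of_lt (by simpa using hx)
            calc (0:ℝ) = d1 0 := hd10.symm
              _ ≤ d1 x := hd1mono h0x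
        rw [← hg0]
        exact hmono (Set.mem_Ici.mpr le_rfl) (Set.mem_Ici.mpr hs) hs
      · have hanti : AntitoneOn g (Set.Iic 0) := by
          refine antitoneOn_of_deriv_nonpos (convex_Iic 0)
            (Continuous.continuousOn (by
              exact continuous_iff_continuousAt.mpr fun x => (hg x).continuousAt)) ?_ ?_
          · intro x _; exact (hg x).differentiableAt.differentiableWithinAt
          · intro x hx
            rw [(hg x).deriv]
            have hx' : x ≤ (0:ℝ) := le_of_lt (by simpa using hx)
            calc d1 x ≤ d1 0 := hd1mono hx'
              _ = 0 := hd10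
        rw [← hg0]; exact hanti (Set.mem_Iic.mpr hs) (Set.mem_Iic.mpr le_rfl) hs
    have hL : L s ≤ s ^ 2 / 8 := by have := hgnn s; simp only [hgdef] at this; linarith
    calc (1 - p + p * Real.exp s) * Real.exp (-(s * p))
        = Real.exp (L s) := by
          simp only [hLdef, hφdef, Real.exp_sub, Real.exp_log (hpos s)]
          rw [Real.exp_neg, div_eq_mul_inv]
          rw [Real.exp_log (show 0 < 1 - p + p * Real.exp s from hpos s)]
      _ ≤ Real.exp (s ^ 2 / 8) := Real.exp_le_exp.mpr hL


lemma exp_aff {z c p t : ℝ} (hz : z = 0 ∨ z = 1) :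
    Real.exp (t * (z * c - p * c)) =
      Real.exp (-(t * c * p)) * (1 + (Real.exp (t * c) - 1) * z) := by
  rcases hz with h | h <;> subst h
  · have : t * ((0:ℝ) * c - p * c) = -(t * c * p) := by ring
    rw [this]; ring
  · have h1 : 1 + (Real.exp (t * c) - 1) * 1 = Real.exp (t * c) := by ring
    rw [h1, ← Real.exp_add]
    congr 1
    ring

lemma tail_bound {Ω : Type*} [MeasurableSpace Ω] (P : Measure Ω) [IsProbabilityMeasure P]
    (M : ℕ) (hM : 1 ≤ M) (p : ℝ) (hp0 : 0 < p) (hp1 : p ≤ 1)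
    (Z : Fin M → Ω → ℝ) (hZmeas : ∀ i, Measurable (Z i))
    (hZval : ∀ i ω, Z i ω = 0 ∨ Z i ω = 1)
    (hZp : ∀ i, P {ω | Z i ω = 1} = ENNReal.ofReal p)
    (hindep : iIndepFun Z P)
    (Δ : Fin M → ℝ) (hΔ : ∀ i, Δ i = 0 ∨ Δ i = 1)
    (ε : ℝ) (hε0 : 0 < ε) :
    (P {ω | ε ≤ ∑ i, Z i ω * Δ i - p * ∑ i, Δ i}).toReal ≤ Real.exp (-2 * ε ^ 2 / M) ∧
    (P {ω | ∑ i, Z i ω * Δ i - p * ∑ i, Δ i ≤ -ε}).toReal ≤ Real.exp (-2 * ε ^ 2 / M) := by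
  have hMpos : (0:ℝ) < M := by exact_mod_cast hM
  set W : Fin M → Ω → ℝ := fun i ω => Z i ω * Δ i - p * Δ i with hWdef
  have hWmeas : ∀ i, Measurable (W i) := fun i =>
    ((hZmeas i).mul_const (Δ i)).sub_const (p * Δ i)
  have hWindep : iIndepFun W P := by
    have := hindep.comp (fun i => fun x : ℝ => x * Δ i - p * Δ i)
      (fun i => (measurable_id.mul_const (Δ i)).sub_const (p * Δ i))
    exact this
  -- integral of Z i is p
  have hZint : ∀ i, Integrable (Z i) P ∧ ∫ ω, Z i ω ∂P = p := by
    intro i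
    have hA : MeasurableSet {ω | Z i ω = 1} := by
      have : {ω | Z i ω = 1} = Z i ⁻¹' {1} := rfl
      rw [this]; exact hZmeas i (measurableSet_singleton 1)
    have hZeq : Z i = Set.indicator {ω | Z i ω = 1} (fun _ => (1:ℝ)) := by
      funext ω
      rw [Set.indicator_apply]
      split_ifs with hm
      · exact hm
      · rcases hZval i ω with h0 | h1
        · exact h0
        · exact absurd h1 hm
    constructor
    · rw [hZeq]; exact (integrable_const (1:ℝ)).indicator hA
    · rw [hZeq, integral_indicator_const _ hA, measureReal_def, hZp i, smul_eq_mul, mul_one,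
        ENNReal.toReal_ofReal hp0.le]
  -- pointwise rewrite of exp (t * W i ω)
  have hptw : ∀ (t : ℝ) (i : Fin M) (ω : Ω), Real.exp (t * W i ω) =
      Real.exp (-(t * Δ i * p)) * (1 + (Real.exp (t * Δ i) - 1) * Z i ω) := by
    intro t i ω
    have := exp_aff (z := Z i ω) (c := Δ i) (p := p) (t := t) (hZval i ω)
    rw [mul_comm (Real.exp (t * Δ i) - 1) (Z i ω)] at this ⊢
    · exact this
  have hint : ∀ (t : ℝ) (i : Fin M), Integrable (fun ω => Real.exp (t * W i ω)) P := by
    intro t i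
    have : (fun ω => Real.exp (t * W i ω)) =
        (fun ω => Real.exp (-(t * Δ i * p)) * (1 + (Real.exp (t * Δ i) - 1) * Z i ω)) := by
      funext ω; exact hptw t i ω
    rw [this]
    exact ((integrable_const (1:ℝ)).add ((hZint i).1.const_mul _)).const_mul _
  have hmgf : ∀ (t : ℝ) (i : Fin M), mgf (W i) P t ≤ Real.exp (t ^ 2 / 8) := by
    intro t i
    have hcalc : mgf (W i) P t =
        Real.exp (-(t * Δ i * p)) * (1 + (Real.exp (t * Δ i) - 1) * p) := by
      unfold mgf
      rw [show (fun ω => Real.exp (t * W i ω)) =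
          (fun ω => Real.exp (-(t * Δ i * p)) * (1 + (Real.exp (t * Δ i) - 1) * Z i ω))
        from funext fun ω => hptw t i ω]
      rw [integral_const_mul, integral_add (integrable_const 1) ((hZint i).1.const_mul _),
        integral_const, integral_const_mul, (hZint i).2]
      simp
    rw [hcalc]
    have key := bern_hoeffding hp0.le hp1 (t * Δ i)
    have h1 : (1 + (Real.exp (t * Δ i) - 1) * p) = (1 - p + p * Real.exp (t * Δ i)) := by ring
    have h2 : Real.exp (-(t * Δ i * p)) = Real.exp (-(t * Δ i * p)) := rfl
    calc Real.exp (-(t * Δ i * p)) * (1 + (Real.exp (t * Δ i) - 1) * p)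
        = (1 - p + p * Real.exp (t * Δ i)) * Real.exp (-(t * Δ i * p)) := by ring
      _ ≤ Real.exp ((t * Δ i) ^ 2 / 8) := key
      _ ≤ Real.exp (t ^ 2 / 8) := by
          apply Real.exp_le_exp.mpr
          rcases hΔ i with h | h <;> rw [h] <;> nlinarith [sq_nonneg t]
  have hintsum : ∀ (t : ℝ), Integrable (fun ω => Real.exp (t * (∑ i, W i) ω)) P :=
    fun t => hWindep.integrable_exp_mul_sum hWmeas (fun i _ => hint t i)
  have hmgfsum : ∀ (t : ℝ), mgf (∑ i, W i) P t ≤ Real.exp ((M : ℝ) * t ^ 2 / 8) := by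
    intro t
    rw [hWindep.mgf_sum hWmeas]
    calc ∏ i, mgf (W i) P t ≤ ∏ _i : Fin M, Real.exp (t ^ 2 / 8) :=
          Finset.prod_le_prod (fun i _ => mgf_nonneg) (fun i _ => hmgf t i)
      _ = Real.exp (t ^ 2 / 8) ^ M := by rw [Finset.prod_const, Finset.card_univ, Fintype.card_fin]
      _ = Real.exp ((M : ℝ) * (t ^ 2 / 8)) := by rw [← Real.exp_nat_mul]
      _ = Real.exp ((M : ℝ) * t ^ 2 / 8) := by ring_nf
  have hsetrw : ∀ ω, (∑ i, W i) ω = ∑ i, Z i ω * Δ i - p * ∑ i, Δ i := by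
    intro ω
    simp only [Finset.sum_apply, hWdef, Finset.sum_sub_distrib, Finset.mul_sum]
  have hexp_eq : Real.exp (-(4 * ε / M) * ε) * Real.exp ((M:ℝ) * (4 * ε / M) ^ 2 / 8) =
      Real.exp (-2 * ε ^ 2 / M) := by
    rw [← Real.exp_add]
    congr 1
    field_simp
    ring
  constructor
  · have ht : (0:ℝ) ≤ 4 * ε / M := by positivity
    have hb := measure_ge_le_exp_mul_mgf (μ := P) (X := ∑ i, W i) ε ht (hintsum _)
    have hss : {ω | ε ≤ ∑ i, Z i ω * Δ i - p * ∑ i, Δ i} = {ω | ε ≤ (∑ i, W i) ω} := by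
      ext ω; rw [Set.mem_setOf_eq, Set.mem_setOf_eq, hsetrw ω]
    rw [hss]
    calc (P {ω | ε ≤ (∑ i, W i) ω}).toReal
        ≤ Real.exp (-(4 * ε / M) * ε) * mgf (∑ i, W i) P (4 * ε / M) := hb
      _ ≤ Real.exp (-(4 * ε / M) * ε) * Real.exp ((M:ℝ) * (4 * ε / M) ^ 2 / 8) := by
          exact mul_le_mul_of_nonneg_left (hmgfsum _) (Real.exp_pos _).le
      _ = Real.exp (-2 * ε ^ 2 / M) := hexp_eq
  · have ht : (-(4 * ε / M) : ℝ) ≤ 0 := neg_nonpos.mpr (by positivity : (0:ℝ) ≤ 4 * ε / M)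
    have hb := measure_le_le_exp_mul_mgf (μ := P) (X := ∑ i, W i) (-ε) ht (hintsum _)
    have hss : {ω | ∑ i, Z i ω * Δ i - p * ∑ i, Δ i ≤ -ε} = {ω | (∑ i, W i) ω ≤ -ε} := by
      ext ω; rw [Set.mem_setOf_eq, Set.mem_setOf_eq, hsetrw ω]
    rw [hss]
    calc (P {ω | (∑ i, W i) ω ≤ -ε}).toReal
        ≤ Real.exp (-(-(4 * ε / M)) * (-ε)) * mgf (∑ i, W i) P (-(4 * ε / M)) := hb
      _ ≤ Real.exp (-(-(4 * ε / M)) * (-ε)) * Real.exp ((M:ℝ) * (-(4 * ε / M)) ^ 2 / 8) := by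
          exact mul_le_mul_of_nonneg_left (hmgfsum _) (Real.exp_pos _).le
      _ = Real.exp (-2 * ε ^ 2 / M) := by
          rw [← hexp_eq, ← Real.exp_add, ← Real.exp_add]
          congr 1
          ring

/-- General-ε concentration bound from the proof of Theorem 1: for i.i.d.
Bernoulli(p) indicators `Z_i` and fixed `Δ_i ∈ {0,1}` with true disagreement
rate `ρ = (1/M) Σ Δ_i`, for `0 < ε < pM`, with probability at least
`1 − 4 exp(−2ε²/M)` the sum `Σ Z_i` is positive and the empirical rate
`ρ̂ = (Σ Z_i Δ_i)/(Σ Z_i)` satisfies `|ρ̂ − ρ| ≤ 2ε/(pM − ε)`. -/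
theorem stmt_1
    {Ω : Type*} [MeasurableSpace Ω] (P : Measure Ω) [IsProbabilityMeasure P]
    (M : ℕ) (hM : 1 ≤ M) (p : ℝ) (hp0 : 0 < p) (hp1 : p ≤ 1)
    (Z : Fin M → Ω → ℝ)
    (hZmeas : ∀ i, Measurable (Z i))
    (hZval : ∀ i ω, Z i ω = 0 ∨ Z i ω = 1)
    (hZp : ∀ i, P {ω | Z i ω = 1} = ENNReal.ofReal p)
    (hindep : iIndepFun Z P)
    (Δ : Fin M → ℝ) (hΔ : ∀ i, Δ i = 0 ∨ Δ i = 1)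
    (ρ : ℝ) (hρ : ρ = (1 / (M : ℝ)) * ∑ i, Δ i)
    (ε : ℝ) (hε0 : 0 < ε) (hεpM : ε < p * M) :
    ENNReal.ofReal (1 - 4 * Real.exp (-2 * ε ^ 2 / M)) ≤
      P {ω | 0 < (∑ i, Z i ω) ∧
             |(∑ i, Z i ω * Δ i) / (∑ i, Z i ω) - ρ| ≤ 2 * ε / (p * M - ε)} := by
  have hMpos : (0:ℝ) < M := by exact_mod_cast hM
  set e : ℝ := Real.exp (-2 * ε ^ 2 / M) with hedef
  have he0 : 0 < e := Real.exp_pos _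
  have hone : ∀ (ω : Ω), ∑ i, Z i ω * (fun _ : Fin M => (1:ℝ)) i - p * ∑ i, (fun _ : Fin M => (1:ℝ)) i
      = ∑ i, Z i ω - p * M := by
    intro ω
    simp [Finset.sum_const, Finset.card_univ]
  have h1 := tail_bound P M hM p hp0 hp1 Z hZmeas hZval hZp hindep
    (fun _ => (1:ℝ)) (fun _ => Or.inr rfl) ε hε0
  have h2 := tail_bound P M hM p hp0 hp1 Z hZmeas hZval hZp hindep Δ hΔ ε hε0
  -- the four bad sets
  set A1 : Set Ω := {ω | ε ≤ ∑ i, Z i ω - p * M} with hA1def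
  set A2 : Set Ω := {ω | ∑ i, Z i ω - p * M ≤ -ε} with hA2def
  set A3 : Set Ω := {ω | ε ≤ ∑ i, Z i ω * Δ i - p * ∑ i, Δ i} with hA3def
  set A4 : Set Ω := {ω | ∑ i, Z i ω * Δ i - p * ∑ i, Δ i ≤ -ε} with hA4def
  have hA1eq : {ω | ε ≤ ∑ i, Z i ω * (fun _ : Fin M => (1:ℝ)) i -
      p * ∑ i, (fun _ : Fin M => (1:ℝ)) i} = A1 := by
    ext ω; rw [Set.mem_setOf_eq, hone ω]; rfl
  have hA2eq : {ω | ∑ i, Z i ω * (fun _ : Fin M => (1:ℝ)) i -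
      p * ∑ i, (fun _ : Fin M => (1:ℝ)) i ≤ -ε} = A2 := by
    ext ω; rw [Set.mem_setOf_eq, hone ω]; rfl
  rw [hA1eq, hA2eq] at h1
  -- measure bounds in ENNReal
  have hle : ∀ (A : Set Ω), (P A).toReal ≤ e → P A ≤ ENNReal.ofReal e := by
    intro A h
    exact (ENNReal.le_ofReal_iff_toReal_le (measure_ne_top P A) he0.le).mpr h
  have hPA1 := hle A1 h1.1
  have hPA2 := hle A2 h1.2
  have hPA3 := hle A3 h2.1
  have hPA4 := hle A4 h2.2
  set Bad : Set Ω := (A1 ∪ A2) ∪ (A3 ∪ A4) with hBaddef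
  have hSmeas : Measurable (fun ω => ∑ i, Z i ω) := by
    apply Finset.measurable_sum
    intro i _; exact hZmeas i
  have hTmeas : Measurable (fun ω => ∑ i, Z i ω * Δ i) := by
    apply Finset.measurable_sum
    intro i _; exact (hZmeas i).mul_const (Δ i)
  have hBadmeas : MeasurableSet Bad := by
    apply MeasurableSet.union <;> apply MeasurableSet.union
    · exact measurableSet_le measurable_const (hSmeas.sub_const _)
    · exact measurableSet_le (hSmeas.sub_const _) measurable_const
    · exact measurableSet_le measurable_const (hTmeas.sub_const _)
    · exact measurableSet_le (hTmeas.sub_const _) measurable_const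
  have hPBad : P Bad ≤ ENNReal.ofReal (4 * e) := by
    calc P Bad ≤ P (A1 ∪ A2) + P (A3 ∪ A4) := measure_union_le _ _
      _ ≤ (P A1 + P A2) + (P A3 + P A4) := add_le_add (measure_union_le _ _) (measure_union_le _ _)
      _ ≤ (ENNReal.ofReal e + ENNReal.ofReal e) + (ENNReal.ofReal e + ENNReal.ofReal e) :=
          add_le_add (add_le_add hPA1 hPA2) (add_le_add hPA3 hPA4)
      _ = ENNReal.ofReal (4 * e) := by
          rw [← ENNReal.ofReal_add he0.le he0.le,
            ← ENNReal.ofReal_add (by positivity) (by positivity)]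
          congr 1; ring
  -- Badᶜ is contained in the good event
  have hsub : Badᶜ ⊆ {ω | 0 < (∑ i, Z i ω) ∧
      |(∑ i, Z i ω * Δ i) / (∑ i, Z i ω) - ρ| ≤ 2 * ε / (p * M - ε)} := by
    intro ω hω
    simp only [hBaddef, Set.compl_union, Set.mem_inter_iff, Set.mem_compl_iff,
      hA1def, hA2def, hA3def, hA4def, Set.mem_setOf_eq, not_le] at hω
    obtain ⟨⟨hS1, hS2⟩, hT1, hT2⟩ := hω
    set S : ℝ := ∑ i, Z i ω with hSdef
    set T : ℝ := ∑ i, Z i ω * Δ i with hTdef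
    set D : ℝ := ∑ i, Δ i with hDdef
    have hpMε : 0 < p * M - ε := by linarith
    have hSpos : 0 < S := by linarith
    have hρnn : 0 ≤ ρ := by
      rw [hρ]
      apply mul_nonneg (by positivity)
      apply Finset.sum_nonneg
      intro i _
      rcases hΔ i with h | h <;> rw [h] <;> norm_num
    have hρle1 : ρ ≤ 1 := by
      rw [hρ]
      have : ∑ i, Δ i ≤ ∑ _i : Fin M, (1:ℝ) := by
        apply Finset.sum_le_sum
        intro i _
        rcases hΔ i with h | h <;> rw [h] <;> norm_num
      have hsum1 : ∑ _i : Fin M, (1:ℝ) = M := by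
        simp [Finset.sum_const, Finset.card_univ]
      rw [div_eq_mul_inv] at *
      calc (1 / (M:ℝ)) * ∑ i, Δ i ≤ (1 / (M:ℝ)) * M := by
            apply mul_le_mul_of_nonneg_left _ (by positivity)
            rw [← hsum1]; exact this
        _ = 1 := by field_simp
    have hρM : ρ * (M:ℝ) = D := by
      rw [hρ, hDdef]; field_simp
    have hid : T - ρ * S = (T - p * D) + ρ * ((p * M) - S) := by
      rw [← hρM]; ring
    have habsS : |p * M - S| ≤ ε := abs_le.mpr ⟨by linarith, by linarith⟩
    have habsT : |T - p * D| ≤ ε := abs_le.mpr ⟨by linarith, by linarith⟩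
    have h1' : |T - ρ * S| ≤ 2 * ε := by
      rw [hid]
      calc |(T - p * D) + ρ * ((p * M) - S)| ≤ |T - p * D| + |ρ * ((p * M) - S)| := abs_add_le _ _
        _ = |T - p * D| + ρ * |(p * M) - S| := by rw [abs_mul, abs_of_nonneg hρnn]
        _ ≤ ε + 1 * ε := by
            apply add_le_add habsT
            apply mul_le_mul hρle1 habsS (abs_nonneg _) zero_le_one
        _ = 2 * ε := by ring
    refine ⟨hSpos, ?_⟩
    have heq : T / S - ρ = (T - ρ * S) / S := by field_simp
    rw [heq, abs_div, abs_of_pos hSpos]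
    exact div_le_div₀ (by positivity) h1' hpMε (by linarith)
  -- final chain
  calc ENNReal.ofReal (1 - 4 * e)
      = 1 - ENNReal.ofReal (4 * e) := by
        rw [ENNReal.ofReal_sub _ (by positivity), ENNReal.ofReal_one]
    _ ≤ 1 - P Bad := tsub_le_tsub_left hPBad 1
    _ = P Badᶜ := (prob_compl_eq_one_sub hBadmeas).symm
    _ ≤ _ := measure_mono hsub
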